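/- The submonoid of ℤ₊² generated by (2,0), (1,2), (0,2) is seminormal but not normal. -/

import Mathlib

lemma mem_char (p : ℤ × ℤ) :
    p ∈ AddSubmonoid.closure {((2 : ℤ), 0), (1, 2), (0, 2)} ↔
    (0 ≤ p.1 ∧ 0 ≤ p.2 ∧ p.2 % 2 = 0 ∧ (p.1 % 2 = 1 → 2 ≤ p.2)) := by
  constructor
  · intro hp
    induction hp using AddSubmonoid.closure_induction with
    | mem x hx =>
      rcases hx with h | h | h <;> subst h <;> simp <;> omega
    | zero => simp
    | add x y hx hy ihx ihy =>
      obtain ⟨a1, a2, a3, a4⟩ := ihx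
      obtain ⟨b1, b2, b3, b4⟩ := ihy
      refine ⟨by simpa using add_nonneg a1 b1, by simpa using add_nonneg a2 b2, ?_, ?_⟩ <;>
        simp only [Prod.fst_add, Prod.snd_add] <;> omega
  · rintro ⟨h1, h2, h3, h4⟩
    have h20 : ((2 : ℤ), (0 : ℤ)) ∈ AddSubmonoid.closure {((2 : ℤ), 0), (1, 2), (0, 2)} :=
      AddSubmonoid.subset_closure (by simp)
    have h12 : ((1 : ℤ), (2 : ℤ)) ∈ AddSubmonoid.closure {((2 : ℤ), 0), (1, 2), (0, 2)} :=
      AddSubmonoid.subset_closure (by simp)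
    have h02 : ((0 : ℤ), (2 : ℤ)) ∈ AddSubmonoid.closure {((2 : ℤ), 0), (1, 2), (0, 2)} :=
      AddSubmonoid.subset_closure (by simp)
    rcases Int.emod_two_eq_zero_or_one p.1 with hpar | hpar
    · have hp : p = ((p.1 / 2).toNat • ((2 : ℤ), (0 : ℤ)) + (p.2 / 2).toNat • ((0 : ℤ), (2 : ℤ))) := by
        ext <;> simp [nsmul_eq_mul] <;> omega
      rw [hp]
      exact AddSubmonoid.add_mem _ (AddSubmonoid.nsmul_mem _ h20 _)
        (AddSubmonoid.nsmul_mem _ h02 _)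
    · have hp : p = (((1 : ℤ), (2 : ℤ)) + (p.1 / 2).toNat • ((2 : ℤ), (0 : ℤ)) +
          ((p.2 - 2) / 2).toNat • ((0 : ℤ), (2 : ℤ))) := by
        ext <;> simp [nsmul_eq_mul] <;> omega
      rw [hp]
      exact AddSubmonoid.add_mem _ (AddSubmonoid.add_mem _ h12
        (AddSubmonoid.nsmul_mem _ h20 _)) (AddSubmonoid.nsmul_mem _ h02 _)

/-- The submonoid of `ℤ₊²` generated by `(2,0)`, `(1,2)`, `(0,2)` is seminormal
but not normal. -/
theorem stmt1 (M : AddSubmonoid (ℤ × ℤ))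
    (hM : M = AddSubmonoid.closure {((2 : ℤ), 0), (1, 2), (0, 2)}) :
    (∀ z : ℤ × ℤ, z ∈ AddSubgroup.closure (M : Set (ℤ × ℤ)) →
      2 • z ∈ M → 3 • z ∈ M → z ∈ M) ∧
    ¬ (∀ z : ℤ × ℤ, z ∈ AddSubgroup.closure (M : Set (ℤ × ℤ)) →
      (∃ t : ℕ, 0 < t ∧ t • z ∈ M) → z ∈ M) := by
  subst hM
  constructor
  · intro z hz h2 h3
    rw [mem_char] at h2 h3 ⊢
    simp only [Prod.smul_fst, Prod.smul_snd] at h2 h3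
    simp only [nsmul_eq_mul, Nat.cast_ofNat] at h2 h3
    obtain ⟨a1, a2, a3, a4⟩ := h2
    obtain ⟨b1, b2, b3, b4⟩ := h3
    refine ⟨by omega, by omega, by omega, by omega⟩
  · intro h
    have h1 : ((1 : ℤ), (0 : ℤ)) ∈ AddSubgroup.closure
        ((AddSubmonoid.closure {((2 : ℤ), 0), (1, 2), (0, 2)} : AddSubmonoid (ℤ × ℤ)) : Set (ℤ × ℤ)) := by
      have e : ((1 : ℤ), (0 : ℤ)) = ((1 : ℤ), (2 : ℤ)) - ((0 : ℤ), (2 : ℤ)) := by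
        simp [Prod.ext_iff]
      rw [e]
      exact sub_mem (AddSubgroup.subset_closure ((mem_char _).2 (by norm_num)))
        (AddSubgroup.subset_closure ((mem_char _).2 (by norm_num)))
    have h2 : (2 : ℕ) • ((1 : ℤ), (0 : ℤ)) ∈
        AddSubmonoid.closure {((2 : ℤ), 0), (1, 2), (0, 2)} := by
      rw [mem_char]; norm_num
    have := h _ h1 ⟨2, by norm_num, h2⟩
    rw [mem_char] at this
    norm_num at this
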